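/- If there exists a sequence of unit vectors (xₙ) in a complex Hilbert space H with ‖Txₙ‖ → ‖T‖ and lim |⟨Txₙ, Axₙ⟩| ≤ ε‖T‖‖A‖ (the limit existing), then for every scalar λ, ‖T + λA‖² ≥ ‖T‖² − 2ε‖T‖‖λA‖, i.e., T ⊥_B^ε A. -/

import Mathlib

open Filter Topology

/-- Sufficient sequential condition for `ε`-approximate Birkhoff-James orthogonality. -/
theorem approx_birkhoffJames_of_sequence
    {H : Type*} [NormedAddCommGroup H] [InnerProductSpace ℂ H] [CompleteSpace H]
    (T A : H →L[ℂ] H) (ε : ℝ) (hε0 : 0 ≤ ε) (hε1 : ε < 1)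
    (x : ℕ → H) (hx : ∀ n, ‖x n‖ = 1)
    (hnorm : Tendsto (fun n => ‖T (x n)‖) atTop (𝓝 ‖T‖))
    (c : ℝ)
    (hc : Tendsto (fun n => ‖(inner ℂ (T (x n)) (A (x n)) : ℂ)‖) atTop (𝓝 c))
    (hcle : c ≤ ε * ‖T‖ * ‖A‖) :
    ∀ lam : ℂ, ‖T + lam • A‖ ^ 2 ≥ ‖T‖ ^ 2 - 2 * ε * ‖T‖ * ‖lam • A‖ := by
  intro lam
  have key : ‖T + lam • A‖ ^ 2 ≥ ‖T‖ ^ 2 - 2 * ‖lam‖ * c := by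
    have htend : Tendsto (fun n => ‖T (x n)‖ ^ 2 -
        2 * ‖lam‖ * ‖(inner ℂ (T (x n)) (A (x n)) : ℂ)‖) atTop
        (𝓝 (‖T‖ ^ 2 - 2 * ‖lam‖ * c)) := by
      exact ((hnorm.pow 2).sub ((tendsto_const_nhds.mul hc)))
    refine le_of_tendsto htend (Filter.Eventually.of_forall fun n => ?_)
    have h1 : ‖(T + lam • A) (x n)‖ ≤ ‖T + lam • A‖ := by
      calc ‖(T + lam • A) (x n)‖ ≤ ‖T + lam • A‖ * ‖x n‖ :=
            (T + lam • A).le_opNorm (x n)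
        _ = ‖T + lam • A‖ := by rw [hx n, mul_one]
    have h2 : ‖(T + lam • A) (x n)‖ ^ 2 = ‖T (x n)‖ ^ 2 +
        2 * Complex.re (inner ℂ (T (x n)) (lam • A (x n))) + ‖lam • A (x n)‖ ^ 2 := by
      have := norm_add_sq (𝕜 := ℂ) (T (x n)) (lam • A (x n))
      simpa only [ContinuousLinearMap.add_apply, ContinuousLinearMap.smul_apply, RCLike.re_to_complex] using this
    have h3 : Complex.re (inner ℂ (T (x n)) (lam • A (x n)) : ℂ) ≥
        -(‖lam‖ * ‖(inner ℂ (T (x n)) (A (x n)) : ℂ)‖) := by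
      have hre : Complex.re (inner ℂ (T (x n)) (lam • A (x n)) : ℂ) ≥
          -‖(inner ℂ (T (x n)) (lam • A (x n)) : ℂ)‖ := by
        have h := Complex.abs_re_le_norm (inner ℂ (T (x n)) (lam • A (x n)) : ℂ)
        linarith [neg_abs_le (Complex.re (inner ℂ (T (x n)) (lam • A (x n)) : ℂ))]
      have hsm : (inner ℂ (T (x n)) (lam • A (x n)) : ℂ) =
          lam * inner ℂ (T (x n)) (A (x n)) := inner_smul_right _ _ _
      rw [hsm] at hre ⊢
      calc Complex.re (lam * inner ℂ (T (x n)) (A (x n)) : ℂ)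
          ≥ -‖(lam * inner ℂ (T (x n)) (A (x n)) : ℂ)‖ := hre
        _ = -(‖lam‖ * ‖(inner ℂ (T (x n)) (A (x n)) : ℂ)‖) := by rw [norm_mul]
    have hsq : ‖T (x n)‖ ^ 2 - 2 * ‖lam‖ * ‖(inner ℂ (T (x n)) (A (x n)) : ℂ)‖ ≤
        ‖(T + lam • A) (x n)‖ ^ 2 := by
      rw [h2]
      nlinarith [sq_nonneg ‖lam • A (x n)‖]
    calc ‖T (x n)‖ ^ 2 - 2 * ‖lam‖ * ‖(inner ℂ (T (x n)) (A (x n)) : ℂ)‖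
        ≤ ‖(T + lam • A) (x n)‖ ^ 2 := hsq
      _ ≤ ‖T + lam • A‖ ^ 2 := by
          have := norm_nonneg ((T + lam • A) (x n))
          nlinarith
  have hlamA : ‖lam • A‖ = ‖lam‖ * ‖A‖ := norm_smul lam A
  have : 2 * ‖lam‖ * c ≤ 2 * ε * ‖T‖ * ‖lam • A‖ := by
    rw [hlamA]
    nlinarith [norm_nonneg lam, norm_nonneg T, norm_nonneg A]
  linarith
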